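/- Let n ≥ 1, let p ≥ 2 be a real number, and let π : ℝⁿ → ℝ be measurable with π ≥ 0. Then for every measurable f : ℝⁿ → ℝ, (4(p−1)/p²) ∫_{ℝⁿ} ∫_{ℝⁿ} (|f(x)|^{p/2} − |f(y)|^{p/2})² π(x−y) dx dy ≤ ∫_{ℝⁿ} ∫_{ℝⁿ} (f(x) − f(y)) (|f(x)|^{p−2} f(x) − |f(y)|^{p−2} f(y)) π(x−y) dx dy, both integrands being pointwise nonnegative and both sides being allowed to be infinite. -/

import Mathlib

open MeasureTheory

lemma sv_sinh_scale {δ : ℝ} (h0 : 0 ≤ δ) (h1 : δ ≤ 1) {v : ℝ} (hv : 0 ≤ v) :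
    Real.sinh (δ * v) ≤ δ * Real.sinh v := by
  have hd : ∀ x : ℝ, HasDerivAt (fun v => δ * Real.sinh v - Real.sinh (δ * v))
      (δ * Real.cosh x - Real.cosh (δ * x) * (δ * 1)) x := fun x =>
    ((Real.hasDerivAt_sinh x).const_mul δ).sub
      ((Real.hasDerivAt_sinh (δ * x)).comp x ((hasDerivAt_id x).const_mul δ))
  have key : MonotoneOn (fun v => δ * Real.sinh v - Real.sinh (δ * v)) (Set.Ici (0:ℝ)) := by
    apply monotoneOn_of_deriv_nonneg (convex_Ici 0)
      (fun x _ => ((hd x).differentiableAt).continuousAt.continuousWithinAt)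
      (fun x _ => ((hd x).differentiableAt).differentiableWithinAt)
    intro x hx
    have hx0 : 0 < x := by simpa using hx
    rw [(hd x).deriv]
    have : Real.cosh (δ * x) ≤ Real.cosh x := by
      rw [Real.cosh_le_cosh, abs_of_nonneg (by positivity), abs_of_nonneg hx0.le]
      nlinarith
    nlinarith
  have h := key (Set.self_mem_Ici) (by exact hv : v ∈ Set.Ici (0:ℝ)) hv
  simp at h
  linarith

lemma sv_cosh_scale {δ : ℝ} (h0 : 0 ≤ δ) (h1 : δ ≤ 1) (v : ℝ) :
    Real.cosh (δ * v) ≤ δ ^ 2 * Real.cosh v + (1 - δ ^ 2) := by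
  wlog hv : 0 ≤ v with H
  · have := H h0 h1 (-v) (by linarith)
    rwa [mul_neg, Real.cosh_neg, Real.cosh_neg] at this
  have hd : ∀ x : ℝ, HasDerivAt (fun v => δ ^ 2 * Real.cosh v + (1 - δ ^ 2) - Real.cosh (δ * v))
      (δ ^ 2 * Real.sinh x + 0 - Real.sinh (δ * x) * (δ * 1)) x := fun x =>
    (((Real.hasDerivAt_cosh x).const_mul (δ ^ 2)).add (hasDerivAt_const x _)).sub
      ((Real.hasDerivAt_cosh (δ * x)).comp x ((hasDerivAt_id x).const_mul δ))
  have key : MonotoneOn (fun v => δ ^ 2 * Real.cosh v + (1 - δ ^ 2) - Real.cosh (δ * v))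
      (Set.Ici (0:ℝ)) := by
    apply monotoneOn_of_deriv_nonneg (convex_Ici 0)
      (fun x _ => ((hd x).differentiableAt).continuousAt.continuousWithinAt)
      (fun x _ => ((hd x).differentiableAt).differentiableWithinAt)
    intro x hx
    have hx0 : 0 < x := by simpa using hx
    rw [(hd x).deriv]
    have := sv_sinh_scale h0 h1 hx0.le
    nlinarith
  have h := key (Set.self_mem_Ici) (by exact hv : v ∈ Set.Ici (0:ℝ)) hv
  simp at h
  linarith

lemma sv_sinh_prod {α β : ℝ} (hα : 0 ≤ α) (hα1 : α ≤ 1) (hab : α + β = 2) (d : ℝ) :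
    α * β * Real.sinh d ^ 2 ≤ Real.sinh (α * d) * Real.sinh (β * d) := by
  have hb : β = 2 - α := by linarith
  subst hb
  have e1 : Real.cosh (α * d + (2 - α) * d) =
      Real.cosh (α * d) * Real.cosh ((2 - α) * d) + Real.sinh (α * d) * Real.sinh ((2 - α) * d) :=
    Real.cosh_add _ _
  have e2 : Real.cosh (α * d - (2 - α) * d) =
      Real.cosh (α * d) * Real.cosh ((2 - α) * d) - Real.sinh (α * d) * Real.sinh ((2 - α) * d) :=
    Real.cosh_sub _ _
  have e3 : α * d + (2 - α) * d = 2 * d := by ring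
  have e4 : Real.cosh (α * d - (2 - α) * d) = Real.cosh ((1 - α) * (2 * d)) := by
    rw [show α * d - (2 - α) * d = -((1 - α) * (2 * d)) by ring, Real.cosh_neg]
  have e5 : Real.cosh (2 * d) = 2 * Real.sinh d ^ 2 + 1 := by
    rw [Real.cosh_two_mul]
    nlinarith [Real.cosh_sq_sub_sinh_sq d]
  have key := sv_cosh_scale (by linarith : (0:ℝ) ≤ 1 - α) (by linarith) (2 * d)
  rw [e3, e5] at e1
  rw [e4] at e2
  rw [e5] at key
  nlinarith [key, e1, e2, sq_nonneg (Real.sinh d)]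

lemma sv_pow_prod {α β : ℝ} (hα : 0 ≤ α) (hα1 : α ≤ 1) (hab : α + β = 2)
    {A B : ℝ} (hA : 0 ≤ A) (hB : 0 ≤ B) :
    α * β * (A - B) ^ 2 ≤ (A ^ α - B ^ α) * (A ^ β - B ^ β) := by
  rcases eq_or_lt_of_le hα with h0 | h0
  · simp [← h0]
  have hb : β = 2 - α := by linarith
  rcases eq_or_lt_of_le hA with hA0 | hA0
  · rcases eq_or_lt_of_le hB with hB0 | hB0
    · simp [← hA0, ← hB0, Real.zero_rpow (ne_of_gt h0),
        Real.zero_rpow (by nlinarith : β ≠ 0)]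
    · rw [← hA0, Real.zero_rpow (ne_of_gt h0), Real.zero_rpow (by nlinarith : β ≠ 0)]
      have h2 : B ^ α * B ^ β = B ^ 2 := by
        rw [← Real.rpow_add hB0, hab, Real.rpow_two]
      subst hb
      nlinarith [h2, Real.rpow_nonneg hB α, Real.rpow_nonneg hB (2 - α), sq_nonneg B,
        sq_nonneg ((1 - α) * B)]
  rcases eq_or_lt_of_le hB with hB0 | hB0
  · rw [← hB0, Real.zero_rpow (ne_of_gt h0), Real.zero_rpow (by nlinarith : β ≠ 0)]
    have h2 : A ^ α * A ^ β = A ^ 2 := by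
      rw [← Real.rpow_add hA0, hab, Real.rpow_two]
    subst hb
    nlinarith [h2, Real.rpow_nonneg hA α, Real.rpow_nonneg hA (2 - α), sq_nonneg A,
      sq_nonneg ((1 - α) * A)]
  set m : ℝ := (Real.log A + Real.log B) / 2 with hm_def
  set d : ℝ := (Real.log A - Real.log B) / 2 with hd_def
  have hAe : ∀ γ : ℝ, A ^ γ = Real.exp (γ * m) * Real.exp (γ * d) := by
    intro γ
    rw [Real.rpow_def_of_pos hA0, ← Real.exp_add]
    ring_nf
    congr 1; rw [hm_def, hd_def]; ring
  have hBe : ∀ γ : ℝ, B ^ γ = Real.exp (γ * m) * Real.exp (-(γ * d)) := by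
    intro γ
    rw [Real.rpow_def_of_pos hB0, ← Real.exp_add]
    ring_nf
    congr 1; rw [hm_def, hd_def]; ring
  have hdiff : ∀ γ : ℝ, A ^ γ - B ^ γ = Real.exp (γ * m) * (2 * Real.sinh (γ * d)) := by
    intro γ
    rw [hAe γ, hBe γ, Real.sinh_eq]
    ring
  have hAB : A - B = Real.exp m * (2 * Real.sinh d) := by
    have := hdiff 1
    simpa using this
  have hexp : Real.exp (α * m) * Real.exp (β * m) = Real.exp m * Real.exp m := by
    rw [← Real.exp_add, ← Real.exp_add]
    congr 1
    linear_combination m * hab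
  have hs := sv_sinh_prod hα hα1 hab d
  rw [hdiff α, hdiff β, hAB]
  have hm : (0:ℝ) < Real.exp m * Real.exp m := by positivity
  calc α * β * (Real.exp m * (2 * Real.sinh d)) ^ 2
      = (Real.exp m * Real.exp m) * (4 * (α * β * Real.sinh d ^ 2)) := by ring
    _ ≤ (Real.exp m * Real.exp m) * (4 * (Real.sinh (α * d) * Real.sinh (β * d))) := by
        apply mul_le_mul_of_nonneg_left _ hm.le
        linarith
    _ = Real.exp (α * m) * (2 * Real.sinh (α * d)) *
          (Real.exp (β * m) * (2 * Real.sinh (β * d))) := by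
        rw [← hexp]; ring

lemma sv_nonneg_case {p : ℝ} (hp : 2 ≤ p) {a b : ℝ} (ha : 0 ≤ a) (hb : 0 ≤ b) :
    4 * (p - 1) / p ^ 2 * (a ^ (p / 2) - b ^ (p / 2)) ^ 2
      ≤ (a - b) * (a ^ (p - 1) - b ^ (p - 1)) := by
  have hp0 : (0:ℝ) < p := by linarith
  have h := sv_pow_prod (α := 2 / p) (β := 2 * (p - 1) / p)
    (by positivity) (by rw [div_le_one hp0]; linarith)
    (by field_simp; ring) (Real.rpow_nonneg ha (p / 2)) (Real.rpow_nonneg hb (p / 2))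
  have e1 : ∀ c : ℝ, 0 ≤ c → (c ^ (p / 2)) ^ (2 / p) = c := by
    intro c hc
    rw [← Real.rpow_mul hc]
    rw [show p / 2 * (2 / p) = 1 by field_simp]
    exact Real.rpow_one c
  have e2 : ∀ c : ℝ, 0 ≤ c → (c ^ (p / 2)) ^ (2 * (p - 1) / p) = c ^ (p - 1) := by
    intro c hc
    rw [← Real.rpow_mul hc]
    congr 1
    field_simp
  rw [e1 a ha, e1 b hb, e2 a ha, e2 b hb] at h
  have : 2 / p * (2 * (p - 1) / p) = 4 * (p - 1) / p ^ 2 := by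
    field_simp
    ring
  linarith [h, this ▸ h]

lemma sv_amgm {p : ℝ} (hp : 2 ≤ p) {a b : ℝ} (ha : 0 ≤ a) (hb : 0 ≤ b) :
    2 * (a ^ (p / 2) * b ^ (p / 2)) ≤ a * b ^ (p - 1) + a ^ (p - 1) * b := by
  have key : ∀ c : ℝ, 0 ≤ c → ∀ u : ℝ, (c ^ u) ^ 2 = c ^ (2 * u) := by
    intro c hc u
    rw [← Real.rpow_natCast (c ^ u) 2, ← Real.rpow_mul hc]
    norm_num
    ring_nf
  have hX2 : (a ^ ((1:ℝ)/2) * b ^ ((p-1)/2)) ^ 2 = a * b ^ (p-1) := by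
    rw [mul_pow, key a ha, key b hb, show (2:ℝ)*((1:ℝ)/2) = 1 by norm_num,
      show (2:ℝ)*((p-1)/2) = p-1 by ring, Real.rpow_one]
  have hY2 : (a ^ ((p-1)/2) * b ^ ((1:ℝ)/2)) ^ 2 = a ^ (p-1) * b := by
    rw [mul_pow, key a ha, key b hb, show (2:ℝ)*((1:ℝ)/2) = 1 by norm_num,
      show (2:ℝ)*((p-1)/2) = p-1 by ring, Real.rpow_one]
  have hXY : (a ^ ((1:ℝ)/2) * b ^ ((p-1)/2)) * (a ^ ((p-1)/2) * b ^ ((1:ℝ)/2))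
      = a ^ (p/2) * b ^ (p/2) := by
    rw [show a ^ ((1:ℝ)/2) * b ^ ((p-1)/2) * (a ^ ((p-1)/2) * b ^ ((1:ℝ)/2))
        = (a ^ ((1:ℝ)/2) * a ^ ((p-1)/2)) * (b ^ ((1:ℝ)/2) * b ^ ((p-1)/2)) by ring,
      ← Real.rpow_add' ha (by norm_num; linarith), ← Real.rpow_add' hb (by norm_num; linarith),
      show (1:ℝ)/2 + (p-1)/2 = p/2 by ring]
  nlinarith [sq_nonneg (a ^ ((1:ℝ)/2) * b ^ ((p-1)/2) - a ^ ((p-1)/2) * b ^ ((1:ℝ)/2)),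
    hX2, hY2, hXY]

lemma sv_mixed_case {p : ℝ} (hp : 2 ≤ p) {a b : ℝ} (ha : 0 ≤ a) (hb : 0 ≤ b) :
    4 * (p - 1) / p ^ 2 * (a ^ (p / 2) - b ^ (p / 2)) ^ 2
      ≤ (a + b) * (a ^ (p - 1) + b ^ (p - 1)) := by
  have hp0 : (0:ℝ) < p := by linarith
  have hc1 : 4 * (p - 1) / p ^ 2 ≤ 1 := by
    rw [div_le_one (by positivity)]
    nlinarith
  have hc0 : 0 ≤ 4 * (p - 1) / p ^ 2 := div_nonneg (by nlinarith) (by positivity)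
  have hsq : (a ^ (p / 2) - b ^ (p / 2)) ^ 2 ≤ (a ^ (p / 2) + b ^ (p / 2)) ^ 2 := by
    have h1 : 0 ≤ a ^ (p/2) := Real.rpow_nonneg ha _
    have h2 : 0 ≤ b ^ (p/2) := Real.rpow_nonneg hb _
    nlinarith
  have hap : a ^ (p/2) * a ^ (p/2) = a * a ^ (p - 1) := by
    rw [← Real.rpow_add' ha (by norm_num; linarith)]
    nth_rewrite 2 [← Real.rpow_one a]
    rw [← Real.rpow_add' ha (by norm_num; linarith)]
    norm_num
  have hbp : b ^ (p/2) * b ^ (p/2) = b * b ^ (p - 1) := by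
    rw [← Real.rpow_add' hb (by norm_num; linarith)]
    nth_rewrite 2 [← Real.rpow_one b]
    rw [← Real.rpow_add' hb (by norm_num; linarith)]
    norm_num
  have hgm := sv_amgm hp ha hb
  calc 4 * (p - 1) / p ^ 2 * (a ^ (p / 2) - b ^ (p / 2)) ^ 2
      ≤ (a ^ (p / 2) + b ^ (p / 2)) ^ 2 := by
        calc 4 * (p - 1) / p ^ 2 * (a ^ (p / 2) - b ^ (p / 2)) ^ 2
            ≤ 1 * (a ^ (p / 2) - b ^ (p / 2)) ^ 2 :=
              mul_le_mul_of_nonneg_right hc1 (sq_nonneg _)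
          _ = (a ^ (p / 2) - b ^ (p / 2)) ^ 2 := one_mul _
          _ ≤ _ := hsq
    _ ≤ (a + b) * (a ^ (p - 1) + b ^ (p - 1)) := by nlinarith [hap, hbp, hgm]

lemma sv_pointwise {p : ℝ} (hp : 2 ≤ p) (a b : ℝ) :
    4 * (p - 1) / p ^ 2 * (|a| ^ (p / 2) - |b| ^ (p / 2)) ^ 2
      ≤ (a - b) * (|a| ^ (p - 2) * a - |b| ^ (p - 2) * b) := by
  have e : ∀ c : ℝ, 0 ≤ c → c ^ (p - 2) * c = c ^ (p - 1) := by
    intro c hc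
    nth_rewrite 2 [← Real.rpow_one c]
    rw [← Real.rpow_add' hc (by norm_num; linarith)]
    congr 1
    ring
  rcases le_or_gt 0 a with ha | ha <;> rcases le_or_gt 0 b with hb | hb
  · rw [abs_of_nonneg ha, abs_of_nonneg hb, e a ha, e b hb]
    exact sv_nonneg_case hp ha hb
  · rw [abs_of_nonneg ha, abs_of_neg hb, e a ha]
    have hb' : (0:ℝ) ≤ -b := by linarith
    have h := sv_mixed_case hp ha hb'
    have : (-b) ^ (p - 2) * b = -((-b) ^ (p - 1)) := by
      rw [← e (-b) hb']
      ring
    rw [this]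
    calc 4 * (p - 1) / p ^ 2 * (a ^ (p / 2) - (-b) ^ (p / 2)) ^ 2
        ≤ (a + -b) * (a ^ (p - 1) + (-b) ^ (p - 1)) := h
      _ = (a - b) * (a ^ (p - 1) - -((-b) ^ (p - 1))) := by ring
  · rw [abs_of_neg ha, abs_of_nonneg hb, e b hb]
    have ha' : (0:ℝ) ≤ -a := by linarith
    have h := sv_mixed_case hp hb ha'
    have : (-a) ^ (p - 2) * a = -((-a) ^ (p - 1)) := by
      rw [← e (-a) ha']
      ring
    rw [this]
    calc 4 * (p - 1) / p ^ 2 * ((-a) ^ (p / 2) - b ^ (p / 2)) ^ 2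
        = 4 * (p - 1) / p ^ 2 * (b ^ (p / 2) - (-a) ^ (p / 2)) ^ 2 := by ring
      _ ≤ (b + -a) * (b ^ (p - 1) + (-a) ^ (p - 1)) := h
      _ = (a - b) * (-((-a) ^ (p - 1)) - b ^ (p - 1)) := by ring
  · rw [abs_of_neg ha, abs_of_neg hb]
    have ha' : (0:ℝ) ≤ -a := by linarith
    have hb' : (0:ℝ) ≤ -b := by linarith
    have h := sv_nonneg_case hp ha' hb'
    have ea : (-a) ^ (p - 2) * a = -((-a) ^ (p - 1)) := by
      rw [← e (-a) ha']; ring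
    have eb : (-b) ^ (p - 2) * b = -((-b) ^ (p - 1)) := by
      rw [← e (-b) hb']; ring
    rw [ea, eb]
    calc 4 * (p - 1) / p ^ 2 * ((-a) ^ (p / 2) - (-b) ^ (p / 2)) ^ 2
        ≤ (-a - -b) * ((-a) ^ (p - 1) - (-b) ^ (p - 1)) := h
      _ = (a - b) * (-((-a) ^ (p - 1)) - -((-b) ^ (p - 1))) := by ring

/-- Strook–Varopoulos inequality in symmetric bilinear form for a Lévy operator with
nonnegative kernel `π`:
`(4(p-1)/p²) ∫∫ (|f(x)|^{p/2}-|f(y)|^{p/2})² π(x-y) ≤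
  ∫∫ (f(x)-f(y))(|f(x)|^{p-2}f(x)-|f(y)|^{p-2}f(y)) π(x-y)`. -/
theorem strook_varopoulos
    (n : ℕ) (hn : 1 ≤ n) (p : ℝ) (hp : 2 ≤ p)
    (π : EuclideanSpace ℝ (Fin n) → ℝ) (hπmeas : Measurable π) (hπ0 : ∀ y, 0 ≤ π y)
    (f : EuclideanSpace ℝ (Fin n) → ℝ) (hfmeas : Measurable f) :
    ENNReal.ofReal (4 * (p - 1) / p ^ 2) *
        (∫⁻ x, ∫⁻ y, ENNReal.ofReal
          ((|f x| ^ (p / 2) - |f y| ^ (p / 2)) ^ 2 * π (x - y)))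
      ≤ ∫⁻ x, ∫⁻ y, ENNReal.ofReal
          ((f x - f y) * (|f x| ^ (p - 2) * f x - |f y| ^ (p - 2) * f y) * π (x - y)) := by
  have hc0 : 0 ≤ 4 * (p - 1) / p ^ 2 :=
    div_nonneg (by nlinarith) (by positivity)
  have key : ∀ x y : EuclideanSpace ℝ (Fin n),
      ENNReal.ofReal (4 * (p - 1) / p ^ 2) *
        ENNReal.ofReal ((|f x| ^ (p / 2) - |f y| ^ (p / 2)) ^ 2 * π (x - y))
      ≤ ENNReal.ofReal
        ((f x - f y) * (|f x| ^ (p - 2) * f x - |f y| ^ (p - 2) * f y) * π (x - y)) := by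
    intro x y
    rw [← ENNReal.ofReal_mul hc0]
    apply ENNReal.ofReal_le_ofReal
    have h1 := sv_pointwise hp (f x) (f y)
    have h2 := mul_le_mul_of_nonneg_right h1 (hπ0 (x - y))
    calc 4 * (p - 1) / p ^ 2 * ((|f x| ^ (p / 2) - |f y| ^ (p / 2)) ^ 2 * π (x - y))
        = 4 * (p - 1) / p ^ 2 * (|f x| ^ (p / 2) - |f y| ^ (p / 2)) ^ 2 * π (x - y) := by
          ring
      _ ≤ _ := h2
  rw [← lintegral_const_mul' _ _ ENNReal.ofReal_ne_top]
  apply lintegral_mono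
  intro x
  dsimp only
  rw [← lintegral_const_mul' _ _ ENNReal.ofReal_ne_top]
  exact lintegral_mono fun y => key x y
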